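/- If p - k is odd (p - k = 2l + 1), then the abelian subalgebra span{L₁₂, …, L_{2l-1,2l}} ⊕ span{P_{p-k+1}, …, P_p} of e(p) is NOT maximal abelian: its centralizer also contains the translation P_{2l+1}. -/
import Mathlib


open Matrix

noncomputable section

/-- The rotation generator in the plane of coordinates `2i, 2i+1` (0-based)
inside `e(p)` realized as `(p+1)×(p+1)` matrices. -/
def Lrot (p i : ℕ) : Matrix (Fin (p+1)) (Fin (p+1)) ℝ :=
  Matrix.of fun a b =>
    if (a : ℕ) = 2*i ∧ (b : ℕ) = 2*i+1 then 1
    else if (a : ℕ) = 2*i+1 ∧ (b : ℕ) = 2*i then -1 else 0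

/-- The translation generator in coordinate `j` (0-based) inside `e(p)`. -/
def Ptr (p j : ℕ) : Matrix (Fin (p+1)) (Fin (p+1)) ℝ :=
  Matrix.of fun a b => if (a : ℕ) = j ∧ (b : ℕ) = p then 1 else 0

lemma Ptr_mul (p j : ℕ) (A : Matrix (Fin (p+1)) (Fin (p+1)) ℝ) :
    Ptr p j * A = Matrix.of fun (a b : Fin (p+1)) =>
      if (a:ℕ) = j then A (Fin.last p) b else 0 := by
  ext a b
  simp only [Matrix.mul_apply, Ptr, Matrix.of_apply, ite_and, ite_mul, one_mul, zero_mul]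
  by_cases h : (a:ℕ) = j
  · simp only [h, if_true]
    rw [Finset.sum_eq_single (Fin.last p)]
    · simp
    · intro c _ hc
      rw [if_neg (by simpa [Fin.ext_iff, Fin.val_last] using hc)]
    · simp
  · simp [h]

lemma mul_Ptr (p j : ℕ) (hj : j < p + 1) (A : Matrix (Fin (p+1)) (Fin (p+1)) ℝ) :
    A * Ptr p j = Matrix.of fun (a b : Fin (p+1)) =>
      if (b:ℕ) = p then A a ⟨j, hj⟩ else 0 := by
  ext a b
  simp only [Matrix.mul_apply, Ptr, Matrix.of_apply, ite_and, mul_ite, mul_one, mul_zero]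
  by_cases h : (b:ℕ) = p
  · simp only [h, if_true]
    rw [Finset.sum_eq_single (⟨j, hj⟩ : Fin (p+1))]
    · simp
    · intro c _ hc
      rw [if_neg (by simpa [Fin.ext_iff] using hc)]
    · simp
  · simp [h]

/-- If `p - k = 2l + 1` is odd, then the abelian subalgebra
`span{L₁₂,…,L_{2l-1,2l}} ⊕ span{P_{p-k+1},…,P_p}` of `e(p)` is NOT maximal
abelian: the extra translation `P_{2l+1}` (0-based index `2l`) commutes with all
of it but does not belong to it. -/
theorem odd_case_not_maximal (l k p : ℕ) (hp : p = 2*l + 1 + k) :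
    Ptr p (2*l) ∉ Submodule.span ℝ
        ({M | ∃ i < l, M = Lrot p i} ∪ {M | ∃ j, 2*l+1 ≤ j ∧ j < p ∧ M = Ptr p j}) ∧
    ∀ B ∈ Submodule.span ℝ
        ({M | ∃ i < l, M = Lrot p i} ∪ {M | ∃ j, 2*l+1 ≤ j ∧ j < p ∧ M = Ptr p j}),
      Ptr p (2*l) * B = B * Ptr p (2*l) := by
  have h2l : 2*l < p + 1 := by omega
  constructor
  · -- use the linear functional M ↦ M ⟨2l⟩ (Fin.last p)
    intro hmem
    let φ : Matrix (Fin (p+1)) (Fin (p+1)) ℝ →ₗ[ℝ] ℝ :=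
      { toFun := fun M => M ⟨2*l, h2l⟩ (Fin.last p)
        map_add' := fun M N => rfl
        map_smul' := fun c M => rfl }
    have hker : Submodule.span ℝ
        ({M | ∃ i < l, M = Lrot p i} ∪ {M | ∃ j, 2*l+1 ≤ j ∧ j < p ∧ M = Ptr p j})
        ≤ LinearMap.ker φ := by
      rw [Submodule.span_le]
      rintro M (⟨i, hi, rfl⟩ | ⟨j, hj1, hj2, rfl⟩)
      · simp only [SetLike.mem_coe, LinearMap.mem_ker]
        show Lrot p i ⟨2*l, h2l⟩ (Fin.last p) = 0
        simp only [Lrot, Matrix.of_apply, Fin.val_last]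
        rw [if_neg (by simp; omega), if_neg (by simp; omega)]
      · simp only [SetLike.mem_coe, LinearMap.mem_ker]
        show Ptr p j ⟨2*l, h2l⟩ (Fin.last p) = 0
        simp only [Ptr, Matrix.of_apply, Fin.val_last]
        rw [if_neg (by simp; omega)]
    have h0 : φ (Ptr p (2*l)) = 0 := hker hmem
    have h1 : φ (Ptr p (2*l)) = 1 := by
      show Ptr p (2*l) ⟨2*l, h2l⟩ (Fin.last p) = 1
      simp [Ptr]
    rw [h1] at h0
    exact one_ne_zero h0
  · intro B hB
    -- show that both products with any element of the span are zero
    have key : ∀ B ∈ Submodule.span ℝ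
        ({M | ∃ i < l, M = Lrot p i} ∪ {M | ∃ j, 2*l+1 ≤ j ∧ j < p ∧ M = Ptr p j}),
        Ptr p (2*l) * B = 0 ∧ B * Ptr p (2*l) = 0 := by
      intro B hB
      induction hB using Submodule.span_induction with
      | mem M hM =>
        rcases hM with ⟨i, hi, rfl⟩ | ⟨j, hj1, hj2, rfl⟩
        · constructor
          · rw [Ptr_mul]
            ext a b
            simp only [Matrix.of_apply, Matrix.zero_apply]
            split_ifs with h
            · simp only [Lrot, Matrix.of_apply, Fin.val_last]
              rw [if_neg (by omega), if_neg (by omega)]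
            · rfl
          · rw [mul_Ptr p (2*l) h2l]
            ext a b
            simp only [Matrix.of_apply, Matrix.zero_apply]
            split_ifs with h
            · simp only [Lrot, Matrix.of_apply]
              rw [if_neg (by omega), if_neg (by omega)]
            · rfl
        · constructor
          · rw [Ptr_mul]
            ext a b
            simp only [Matrix.of_apply, Matrix.zero_apply]
            split_ifs with h
            · simp only [Ptr, Matrix.of_apply, Fin.val_last]
              rw [if_neg (by omega)]
            · rfl
          · rw [mul_Ptr p (2*l) h2l]
            ext a b
            simp only [Matrix.of_apply, Matrix.zero_apply]
            split_ifs with h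
            · simp only [Ptr, Matrix.of_apply]
              rw [if_neg (by omega)]
            · rfl
      | zero => simp
      | add x y hx hy ihx ihy =>
        exact ⟨by rw [mul_add, ihx.1, ihy.1, add_zero],
               by rw [add_mul, ihx.2, ihy.2, add_zero]⟩
      | smul c x hx ih =>
        exact ⟨by rw [Matrix.mul_smul, ih.1, smul_zero],
               by rw [Matrix.smul_mul, ih.2, smul_zero]⟩
    obtain ⟨h1, h2⟩ := key B hB
    rw [h1, h2]

end
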